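/- Let F be a local field with ring of integers 𝔬 and maximal ideal 𝔭, char residue field ≠ 2, ℓ ≥ 2, a ∈ F^×, y ∈ F^{ℓ−1}. Suppose x̄(y)·j_{1,ℓ}(diag(a,a⁻¹)) = u·k where u ∈ GL_{2ℓ+1}(F) is upper unitriangular and k ∈ GL_{2ℓ+1}(𝔬) is a matrix all of whose entries are in 𝔬, whose diagonal entries lie in 1 + 𝔭, and whose below-diagonal entries lie in 𝔭 except possibly the (2ℓ+1,1) entry which lies in ϖ𝔬. Then a ∈ 1 + 𝔭 and every entry of y lies in 𝔭. -/

import Mathlib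

open Matrix

/-- The lower unitriangular matrix `x̄(y) ∈ SO_{2ℓ+1}(F)` determined by `y`. -/
def xbar (F : Type*) [Field F] (l : ℕ) (y : Fin (l - 1) → F) :
    Matrix (Fin (2 * l + 1)) (Fin (2 * l + 1)) F :=
  fun i j =>
    if i = j then 1
    else if h : (j : ℕ) = 0 ∧ 1 ≤ (i : ℕ) ∧ (i : ℕ) ≤ l - 1 then y ⟨(i : ℕ) - 1, by omega⟩
    else if h' : (i : ℕ) = 2 * l ∧ l + 1 ≤ (j : ℕ) ∧ (j : ℕ) ≤ 2 * l - 1 then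
      -y ⟨2 * l - 1 - (j : ℕ), by omega⟩
    else 0

/-- `j_{1,ℓ}(diag(a, a⁻¹)) = diag(a, I_{2ℓ−1}, a⁻¹)`. -/
def jemb (F : Type*) [Field F] (l : ℕ) (a : F) :
    Matrix (Fin (2 * l + 1)) (Fin (2 * l + 1)) F :=
  fun i j =>
    if i = j then (if (i : ℕ) = 0 then a else if (i : ℕ) = 2 * l then a⁻¹ else 1) else 0

/-- An element of `F` belongs to the maximal ideal `𝔭` of the valuation ring `O`. -/
def memP {F : Type*} [Field F] (O : ValuationSubring F) (x : F) : Prop :=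
  ∃ p : O, p ∈ IsLocalRing.maximalIdeal O ∧ (p : F) = x

/-- (Lemma 6.1, support of the Whittaker function.)  If
`x̄(y)·j_{1,ℓ}(diag(a,a⁻¹)) = u·k` with `u` upper unitriangular and `k` integral with
diagonal entries in `1 + 𝔭`, below-diagonal entries in `𝔭` except possibly the
`(2ℓ+1, 1)` entry which lies in `ϖ𝔬`, then `a ∈ 1 + 𝔭` and every entry of `y` is in `𝔭`. -/
theorem stmt11 (F : Type*) [Field F] (O : ValuationSubring F)
    (ϖ : F) (hϖO : ϖ ∈ O) (hϖ0 : ϖ ≠ 0)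
    (hϖgen : Ideal.span {(⟨ϖ, hϖO⟩ : O)} = IsLocalRing.maximalIdeal O)
    (h2 : (2 : O) ∉ IsLocalRing.maximalIdeal O)
    (l : ℕ) (hl : 2 ≤ l) (a : F) (ha : a ≠ 0) (y : Fin (l - 1) → F)
    (u k : Matrix (Fin (2 * l + 1)) (Fin (2 * l + 1)) F)
    (hu_upper : ∀ i j : Fin (2 * l + 1), (j : ℕ) < (i : ℕ) → u i j = 0)
    (hu_diag : ∀ i : Fin (2 * l + 1), u i i = 1)
    (hk_int : ∀ i j : Fin (2 * l + 1), k i j ∈ O)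
    (hk_diag : ∀ i : Fin (2 * l + 1), memP O (k i i - 1))
    (hk_below : ∀ i j : Fin (2 * l + 1), (j : ℕ) < (i : ℕ) →
      ¬((i : ℕ) = 2 * l ∧ (j : ℕ) = 0) → memP O (k i j))
    (hk_corner : ∃ c ∈ O, k ⟨2 * l, by omega⟩ ⟨0, by omega⟩ = ϖ * c)
    (heq : xbar F l y * jemb F l a = u * k) :
    memP O (a - 1) ∧ ∀ i, memP O (y i) := by

  classical
  set i0 : Fin (2 * l + 1) := ⟨2 * l, by omega⟩ with hi0
  -- bottom row of u * k is bottom row of k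
  have hrow : ∀ j, k i0 j = (xbar F l y * jemb F l a) i0 j := by
    intro j
    have h1 : (u * k) i0 j = k i0 j := by
      rw [Matrix.mul_apply, Finset.sum_eq_single i0]
      · rw [hu_diag, one_mul]
      · intro m _ hm
        have hmv : (m : ℕ) < (i0 : ℕ) := by
          have : (m : ℕ) ≠ 2 * l := fun h => hm (Fin.ext h)
          have := m.isLt; simp only [hi0]; omega
        rw [hu_upper i0 m hmv, zero_mul]
      · simp
    rw [heq]; exact h1.symm
  have hM : ∀ j, (xbar F l y * jemb F l a) i0 j = xbar F l y i0 j * jemb F l a j j := by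
    intro j
    rw [Matrix.mul_apply, Finset.sum_eq_single j]
    · intro m _ hm
      have : jemb F l a m j = 0 := by unfold jemb; simp [hm]
      rw [this, mul_zero]
    · simp
  -- the diagonal entry
  have hdiag : k i0 i0 = a⁻¹ := by
    rw [hrow, hM]
    unfold xbar jemb
    have h0 : (i0 : ℕ) ≠ 0 := by simp [hi0]; omega
    simp [h0]
    exact fun h => absurd rfl h
  have hainv : memP O (a⁻¹ - 1) := by rw [← hdiag]; exact hk_diag i0
  constructor
  · obtain ⟨p, hp, hpe⟩ := hainv
    have hunit : IsUnit ((1 : O) + p) := by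
      by_contra hnu
      have : (1 : O) + p ∈ IsLocalRing.maximalIdeal O := hnu
      have h1 : (1 : O) ∈ IsLocalRing.maximalIdeal O := by
        have := Ideal.sub_mem _ this hp; simpa using this
      exact (IsLocalRing.maximalIdeal.isMaximal O).ne_top (Ideal.eq_top_of_isUnit_mem _ h1 isUnit_one)
    obtain ⟨w, hw⟩ := isUnit_iff_exists.mp hunit
    have hw1 : (w : F) * a⁻¹ = 1 := by
      have h2' : ((1 : O) + p : F) = a⁻¹ := by push_cast [hpe]; ring
      have hc := congrArg (fun x : O => (x : F)) hw.1
      push_cast at hc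
      rw [← h2']
      push_cast
      linear_combination hc
    have hwa : (w : F) = a := by
      field_simp at hw1
      exact hw1
    refine ⟨-(w * p), neg_mem (Ideal.mul_mem_left _ _ hp), ?_⟩
    push_cast [hwa, hpe]
    field_simp
    ring
  · intro i
    have hiv := i.isLt
    set j : Fin (2 * l + 1) := ⟨2 * l - 1 - (i : ℕ), by omega⟩ with hj
    have hxb : xbar F l y i0 j = -y i := by
      unfold xbar
      have hne : i0 ≠ j := by
        intro h; have := congrArg Fin.val h; simp [hi0, hj] at this; omega
      have hc1 : ¬((j : ℕ) = 0 ∧ 1 ≤ (i0 : ℕ) ∧ (i0 : ℕ) ≤ l - 1) := by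
        simp [hi0, hj]; omega
      have hc2 : (i0 : ℕ) = 2 * l ∧ l + 1 ≤ (j : ℕ) ∧ (j : ℕ) ≤ 2 * l - 1 := by
        simp [hi0, hj]; omega
      rw [if_neg hne, dif_neg hc1, dif_pos hc2]
      congr 1
      congr 1
      apply Fin.ext
      simp [hj]
      omega
    have hjj : jemb F l a j j = 1 := by
      unfold jemb
      have h0 : (j : ℕ) ≠ 0 := by simp [hj]; omega
      have h2l : (j : ℕ) ≠ 2 * l := by simp [hj]; omega
      simp [h0, h2l]
    have hk : k i0 j = -y i := by rw [hrow, hM, hxb, hjj, mul_one]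
    have hmem : memP O (k i0 j) := by
      apply hk_below
      · simp [hi0, hj]; omega
      · intro ⟨_, h0⟩; simp [hj] at h0; omega
    rw [hk] at hmem
    obtain ⟨p, hp, hpe⟩ := hmem
    exact ⟨-p, neg_mem hp, by push_cast [hpe]; ring⟩
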